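/- arXiv:1711.06318 — 3 statements merged into one kernel-verified Lean document; each statement's English description precedes it below -/
import Mathlib

section
/- In the 3x3 game (with 0 < ρ < 1) with U1 = [[5,0,0],[0,0,0],[ρ,ρ,2]] and U2 = [[0,0,ρ],[0,5,ρ],[0,0,2]], the pure profile (a3,a6) is the unique Nash equilibrium. -/
open Finset

/-- A mixed strategy: nonnegative probabilities summing to 1. -/
def isDist {α : Type*} [Fintype α] (x : α → ℝ) : Prop :=
  (∀ a, 0 ≤ x a) ∧ ∑ a, x a = 1

/-- Expected payoff in a bimatrix game. -/
def pay {m k : ℕ} (U : Fin m → Fin k → ℝ) (x : Fin m → ℝ) (y : Fin k → ℝ) : ℝ :=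
  ∑ i, ∑ j, x i * U i j * y j

/-- The indicator (pureStrat) strategy on action `i`. -/
def pureStrat {m : ℕ} (i : Fin m) : Fin m → ℝ := fun j => if j = i then 1 else 0

/-- Nash equilibrium of a bimatrix game: mutual best responses among mixed strategies. -/
def isNE {m k : ℕ} (U1 U2 : Fin m → Fin k → ℝ) (x : Fin m → ℝ) (y : Fin k → ℝ) : Prop :=
  isDist x ∧ isDist y ∧
  (∀ x', isDist x' → pay U1 x' y ≤ pay U1 x y) ∧
  (∀ y', isDist y' → pay U2 x y' ≤ pay U2 x y)

def H1 (ρ : ℝ) : Fin 3 → Fin 3 → ℝ := ![![5, 0, 0], ![0, 0, 0], ![ρ, ρ, 2]]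
def H2 (ρ : ℝ) : Fin 3 → Fin 3 → ℝ := ![![0, 0, ρ], ![0, 5, ρ], ![0, 0, 2]]

lemma pure_isDist {m : ℕ} [NeZero m] (i : Fin m) : isDist (pureStrat i) := by
  constructor
  · intro a; unfold pureStrat; split <;> norm_num
  · simp [pureStrat]

/-- For 0 < ρ < 1, the pureStrat profile (a3,a6) is the unique Nash equilibrium. -/
theorem h_unique_NE (ρ : ℝ) (h0 : 0 < ρ) (h1 : ρ < 1) :
    isNE (H1 ρ) (H2 ρ) (pureStrat 2) (pureStrat 2) ∧
    ∀ x y, isNE (H1 ρ) (H2 ρ) x y → x = pureStrat 2 ∧ y = pureStrat 2 := by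
  constructor
  · refine ⟨pure_isDist 2, pure_isDist 2, ?_, ?_⟩
    · intro x' hx'
      have h0' := hx'.1 0
      have h1' := hx'.1 1
      have h2' := hx'.1 2
      have hs := hx'.2
      rw [Fin.sum_univ_three] at hs
      simp [pay, pureStrat, H1, Fin.sum_univ_three]
      nlinarith
    · intro y' hy'
      have h0' := hy'.1 0
      have h1' := hy'.1 1
      have h2' := hy'.1 2
      have hs := hy'.2
      rw [Fin.sum_univ_three] at hs
      simp [pay, pureStrat, H2, Fin.sum_univ_three]
      nlinarith
  · rintro x y ⟨hx, hy, hbr1, hbr2⟩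
    have hx0 := hx.1 0
    have hx1 := hx.1 1
    have hx2 := hx.1 2
    have hxs := hx.2
    rw [Fin.sum_univ_three] at hxs
    have hy0 := hy.1 0
    have hy1 := hy.1 1
    have hy2 := hy.1 2
    have hys := hy.2
    rw [Fin.sum_univ_three] at hys
    have A0 := hbr1 (pureStrat 0) (pure_isDist 0)
    have A2 := hbr1 (pureStrat 2) (pure_isDist 2)
    have B1 := hbr2 (pureStrat 1) (pure_isDist 1)
    have B2 := hbr2 (pureStrat 2) (pure_isDist 2)
    simp [pay, pureStrat, H1, Fin.sum_univ_three] at A0 A2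
    simp [pay, pureStrat, H2, Fin.sum_univ_three] at B1 B2
    -- row 3 payoff is at least ρ
    have hA : ρ ≤ ρ * y 0 + ρ * y 1 + 2 * y 2 := by nlinarith
    -- Step 1: x 1 = 0
    have hx1z : x 1 = 0 := by
      by_contra h
      have hpos : 0 < x 1 := lt_of_le_of_ne hx1 (Ne.symm h)
      rcases le_total (5 * y 0) (ρ * y 0 + ρ * y 1 + 2 * y 2) with hc | hc
      · nlinarith [mul_nonneg hx0 (sub_nonneg.2 hc),
          mul_pos hpos (lt_of_lt_of_le h0 hA)]
      · nlinarith [mul_nonneg hx2 (sub_nonneg.2 hc),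
          mul_pos hpos (lt_of_lt_of_le h0 (le_trans hA hc))]
    -- Step 2: y 2 = 1, y 0 = y 1 = 0
    have hBpos : 0 < x 0 * ρ + x 1 * ρ + x 2 * 2 := by nlinarith
    have hy2' : 1 ≤ y 2 := by nlinarith [mul_nonneg (mul_nonneg hx0 h0.le) hy2]
    have hy2e : y 2 = 1 := le_antisymm (by linarith) hy2'
    have hy0e : y 0 = 0 := by linarith
    have hy1e : y 1 = 0 := by linarith
    -- Step 3: x 2 = 1, x 0 = 0
    have hx2e : x 2 = 1 := by
      rw [hy0e, hy1e, hy2e] at A2; nlinarith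
    have hx0e : x 0 = 0 := by linarith
    constructor <;> funext i <;> fin_cases i <;>
      simp [pureStrat, hx0e, hx1z, hx2e, hy0e, hy1e, hy2e]
end

section
/- In the 3x3 game with U1 = [[5,0,0],[0,0,0],[ρ,ρ,2]] and U2 = [[0,0,ρ],[0,5,ρ],[0,0,2]] for fixed 0 < ρ < 1, the Nash equilibrium (a3,a6) is weakly Pareto efficient, even though the pure outcome (a1,a4) has utility sum 5 which exceeds the equilibrium utility sum 4. -/
open Finset

lemma key (a b c p q r ρ : ℝ) (h0 : 0 < ρ) (h1 : ρ < 1)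
    (ha : 0 ≤ a) (hb : 0 ≤ b) (hc : 0 ≤ c) (hp : 0 ≤ p) (hq : 0 ≤ q) (hr : 0 ≤ r)
    (hx : a + b + c = 1) (hy : p + q + r = 1)
    (hP1 : 2 < 5*a*p + ρ*c*p + ρ*c*q + 2*c*r)
    (hP2 : 2 < ρ*a*r + 5*b*q + ρ*b*r + 2*c*r) : False := by
  have e1 : 2*(a+b) < 5*a*p := by nlinarith [mul_nonneg hc hp, mul_nonneg hc hq, mul_nonneg hc hr]
  have e2 : 2*(p+q) < 5*b*q := by nlinarith [mul_nonneg ha hr, mul_nonneg hb hr, mul_nonneg hc hr]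
  nlinarith [mul_pos (by linarith : (0:ℝ) < 5*a*p - 2*(a+b)) (by linarith : (0:ℝ) < 5*b*q - 2*(p+q)),
    sq_nonneg (a*p - b*q), sq_nonneg (a*q - b*p), sq_nonneg (a-b), sq_nonneg (p-q),
    mul_nonneg ha hp, mul_nonneg hb hq, mul_nonneg ha hq, mul_nonneg hb hp,
    mul_nonneg (mul_nonneg ha hb) (mul_nonneg hp hq),
    mul_nonneg (mul_nonneg ha hp) (mul_nonneg hb hq)]

/-- For 0 < ρ < 1, the equilibrium (a3,a6) is weakly Pareto efficient (no mixed
profile gives both players strictly more than 2), even though the pureStrat outcome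
(a1,a4) has utility sum 5, exceeding the equilibrium utility sum 4. -/
theorem h_eq_weakly_pareto (ρ : ℝ) (h0 : 0 < ρ) (h1 : ρ < 1) :
    (¬ ∃ x' y', isDist x' ∧ isDist y' ∧
        (2 : ℝ) < pay (H1 ρ) x' y' ∧ (2 : ℝ) < pay (H2 ρ) x' y') ∧
    H1 ρ 0 0 + H2 ρ 0 0 = 5 ∧
    H1 ρ 2 2 + H2 ρ 2 2 = 4 ∧
    H1 ρ 2 2 + H2 ρ 2 2 < H1 ρ 0 0 + H2 ρ 0 0 := by
  refine ⟨?_, by norm_num [H1, H2], by norm_num [H1, H2, Matrix.cons_val_two], by norm_num [H1, H2, Matrix.cons_val_two]⟩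
  rintro ⟨x, y, ⟨hx0, hx1⟩, ⟨hy0, hy1⟩, hp1, hp2⟩
  simp only [pay, H1, H2, Fin.sum_univ_three, Matrix.cons_val_zero, Matrix.cons_val_one,
    Matrix.head_cons, Matrix.cons_val_two, Matrix.tail_cons] at hp1 hp2
  simp only [Fin.sum_univ_three] at hx1 hy1
  exact key (x 0) (x 1) (x 2) (y 0) (y 1) (y 2) ρ h0 h1
    (hx0 0) (hx0 1) (hx0 2) (hy0 0) (hy0 1) (hy0 2) hx1 hy1
    (by linarith [hp1]) (by linarith [hp2])
end

section
/- For the minimization min γ subject to γ ≥ E_{x'}[Ũ_i] for all i ∈ N, over mixed profiles x' of an n-player game: there exists an optimal (or ε-optimal for every ε>0) solution in which each player's mixed strategy has support of size at most n. (Restricted form: once the strategies of all players but one are fixed, the objective is linear in the remaining player's strategy, so that player has a best response with support of size at most n.) -/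
open Finset

/-- Multilinear expected value of a payoff array `U` under a strategy profile `x`. -/
def expU {n : ℕ} {A : Fin n → Type*} [∀ i, Fintype (A i)]
    (U : (∀ i, A i) → ℝ) (x : ∀ i, A i → ℝ) : ℝ :=
  ∑ a : ∀ i, A i, U a * ∏ j, x j (a j)

/-- A mixed strategy profile: one mixed strategy per player. -/
def isProfile {n : ℕ} {A : Fin n → Type*} [∀ i, Fintype (A i)]
    (x : ∀ i, A i → ℝ) : Prop :=
  ∀ i, isDist (x i)

/-- Expectation against `Function.update x' k g` is linear in `g`, with explicit
coefficients. -/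
lemma expU_update {n : ℕ} {A : Fin n → Type*} [∀ i, Fintype (A i)]
    (W : (∀ i, A i) → ℝ) (x' : ∀ j, A j → ℝ) (k : Fin n) [DecidableEq (A k)]
    (g : A k → ℝ) :
    expU W (Function.update x' k g) =
      ∑ b, g b * ∑ a ∈ Finset.univ.filter (fun a : ∀ i, A i => a k = b),
        W a * ∏ j ∈ Finset.univ.erase k, x' j (a j) := by
  classical
  have hterm : ∀ a : ∀ i, A i,
      ∏ j, Function.update x' k g j (a j)
        = g (a k) * ∏ j ∈ Finset.univ.erase k, x' j (a j) := by
    intro a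
    rw [← Finset.mul_prod_erase Finset.univ (fun j => Function.update x' k g j (a j))
      (Finset.mem_univ k), Function.update_self]
    congr 1
    refine Finset.prod_congr rfl fun j hj => ?_
    rw [Function.update_of_ne (Finset.ne_of_mem_erase hj)]
  calc expU W (Function.update x' k g)
      = ∑ a : ∀ i, A i, W a * (g (a k) * ∏ j ∈ Finset.univ.erase k, x' j (a j)) := by
        unfold expU; exact Finset.sum_congr rfl fun a _ => by rw [hterm a]
    _ = ∑ b, ∑ a ∈ Finset.univ.filter (fun a : ∀ i, A i => a k = b),
          W a * (g (a k) * ∏ j ∈ Finset.univ.erase k, x' j (a j)) :=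
        (Finset.sum_fiberwise_of_maps_to (fun a _ => Finset.mem_univ (a k)) _).symm
    _ = ∑ b, g b * ∑ a ∈ Finset.univ.filter (fun a : ∀ i, A i => a k = b),
        W a * ∏ j ∈ Finset.univ.erase k, x' j (a j) := by
        refine Finset.sum_congr rfl fun b _ => ?_
        rw [Finset.mul_sum]
        refine Finset.sum_congr rfl fun a ha => ?_
        have : a k = b := (Finset.mem_filter.1 ha).2
        rw [this]; ring

/-- Minimizing the max of `n` linear functionals over the simplex: there is a minimizer
supported on at most `n` points. -/
lemma exists_min_small_support {n : ℕ} (hn : 0 < n) {β : Type*} [Fintype β] [Nonempty β]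
    (c : β → (Fin n → ℝ)) :
    ∃ g : β → ℝ, isDist g ∧ (∃ s : Finset β, s.card ≤ n ∧ ∀ a ∉ s, g a = 0) ∧
      ∀ h : β → ℝ, isDist h →
        (Finset.univ.sup' ⟨⟨0, hn⟩, Finset.mem_univ _⟩ (fun i => ∑ b, g b * c b i)) ≤
        (Finset.univ.sup' ⟨⟨0, hn⟩, Finset.mem_univ _⟩ (fun i => ∑ b, h b * c b i)) := by
  classical
  have hFn : Nonempty (Fin n) := ⟨⟨0, hn⟩⟩
  set ne : (Finset.univ : Finset (Fin n)).Nonempty := ⟨⟨0, hn⟩, Finset.mem_univ _⟩ with hne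
  set φ : (Fin n → ℝ) → ℝ := fun y => Finset.univ.sup' ne (fun i => y i) with hφ
  have hφcont : Continuous φ := by
    refine continuous_iff_continuousAt.2 fun y => ?_
    exact ContinuousAt.finset_sup'_apply ne fun i _ => (continuous_apply i).continuousAt
  set comb : (β → ℝ) → (Fin n → ℝ) := fun w => ∑ b, w b • c b with hcombdef
  have hcomb_apply : ∀ (w : β → ℝ) (i : Fin n), comb w i = ∑ b, w b * c b i := by
    intro w i
    simp [hcombdef, Finset.sum_apply]
  set K : Set (Fin n → ℝ) := convexHull ℝ (Set.range c) with hK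
  have hKcpt : IsCompact K := (Set.finite_range c).isCompact_convexHull (𝕜 := ℝ)
  have hKconv : Convex ℝ K := convex_convexHull _ _
  have hKne : K.Nonempty :=
    ⟨c (Classical.arbitrary β), subset_convexHull _ _ (Set.mem_range_self _)⟩
  obtain ⟨y₀, hy₀K, hy₀min⟩ := hKcpt.exists_isMinOn hKne hφcont.continuousOn
  have hmemK : ∀ w : β → ℝ, isDist w → comb w ∈ K := by
    intro w hw
    have h1 : (0:ℝ) < ∑ b, w b := by rw [hw.2]; norm_num
    have := Finset.centerMass_mem_convexHull (Finset.univ : Finset β)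
      (fun b _ => hw.1 b) h1 (fun b _ => (Set.mem_range_self b : c b ∈ Set.range c))
    rwa [Finset.centerMass_eq_of_sum_1 _ _ hw.2] at this
  -- φ shifts under subtracting a constant vector
  have hshift : ∀ (y : Fin n → ℝ) (t : ℝ), φ (y - t • (fun _ : Fin n => (1:ℝ))) = φ y - t := by
    intro y t
    have h2 : φ (y - t • (fun _ : Fin n => (1:ℝ)))
        = Finset.univ.sup' ne (fun i => y i - t) := by
      simp only [hφ, Pi.sub_apply, Pi.smul_apply, smul_eq_mul, mul_one]
    have h3 := Finset.comp_sup'_eq_sup'_comp (H := ne) (f := fun i => y i)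
      (fun r => r - t) (fun a b => (max_sub_sub_right a b t).symm)
    rw [h2, show (fun i => y i - t) = ((fun r => r - t) ∘ fun i => y i) from rfl, ← h3]
  -- y₀ is not in the interior of K
  have hy₀notint : y₀ ∉ interior K := by
    intro hy
    obtain ⟨ε, hε, hball⟩ := Metric.isOpen_iff.1 isOpen_interior y₀ hy
    set y₁ : Fin n → ℝ := y₀ - (ε / 2) • (fun _ : Fin n => (1:ℝ)) with hy₁def
    have hmem : y₁ ∈ Metric.ball y₀ ε := by
      rw [Metric.mem_ball, dist_eq_norm]
      have : y₁ - y₀ = -((ε / 2) • (fun _ : Fin n => (1:ℝ))) := by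
        rw [hy₁def]; abel
      rw [this, norm_neg, norm_smul]
      have h1 : ‖(fun _ : Fin n => (1:ℝ))‖ = 1 := by
        rw [pi_norm_const, norm_one]
      rw [h1, Real.norm_eq_abs, abs_of_pos (by linarith)]
      linarith
    have hy₁K : y₁ ∈ K := interior_subset (hball hmem)
    have hle := hy₀min hy₁K
    rw [Set.mem_setOf_eq] at hle
    have := hshift y₀ (ε / 2)
    rw [← hy₁def] at this
    rw [this] at hle
    linarith
  -- a supporting functional at y₀
  have hsep : ∃ f : (Fin n → ℝ) →ₗ[ℝ] ℝ, f ≠ 0 ∧ ∀ z ∈ K, f z ≤ f y₀ := by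
    rcases Set.eq_empty_or_nonempty (interior K) with hint | ⟨w₀, hw₀⟩
    · -- degenerate case: K lies in a proper affine subspace
      have hspan : affineSpan ℝ K ≠ ⊤ := by
        intro htop
        have hne2 : (interior K).Nonempty :=
          (hKconv.interior_nonempty_iff_affineSpan_eq_top).2 htop
        rw [hint] at hne2
        exact Set.not_nonempty_empty hne2
      have hdir : (affineSpan ℝ K).direction ≠ ⊤ := by
        intro h
        exact hspan (((AffineSubspace.direction_eq_top_iff_of_nonempty
          (hKne.mono (subset_affineSpan ℝ K)))).1 h)
      obtain ⟨f, hf0, hker⟩ := Submodule.exists_le_ker_of_lt_top _ (lt_top_iff_ne_top.2 hdir)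
      refine ⟨f, hf0, fun z hz => ?_⟩
      have hmem : z -ᵥ y₀ ∈ (affineSpan ℝ K).direction :=
        AffineSubspace.vsub_mem_direction (subset_affineSpan ℝ K hz) (subset_affineSpan ℝ K hy₀K)
      have hz0 : f (z - y₀) = 0 := hker hmem
      rw [map_sub] at hz0
      linarith [hz0]
    · -- separating hyperplane case
      obtain ⟨f, u, hfu1, hfu2⟩ := geometric_hahn_banach_open (hKconv.interior)
        isOpen_interior (convex_singleton y₀) (Set.disjoint_singleton_right.2 hy₀notint)
      have hfy₀ : u ≤ f y₀ := hfu2 y₀ rfl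
      have hw₀lt : f w₀ < u := hfu1 w₀ hw₀
      refine ⟨(f : (Fin n → ℝ) →ₗ[ℝ] ℝ), ?_, fun z hz => ?_⟩
      · intro h0
        have h1 : f w₀ = 0 := by
          have := congrArg (fun g : (Fin n → ℝ) →ₗ[ℝ] ℝ => g w₀) h0; simpa using this
        have h2 : f y₀ = 0 := by
          have := congrArg (fun g : (Fin n → ℝ) →ₗ[ℝ] ℝ => g y₀) h0; simpa using this
        rw [h1] at hw₀lt; rw [h2] at hfy₀; linarith
      · -- pass to the limit along the open segment from w₀ to z
        have hseg : ∀ t ∈ Set.Ioo (0:ℝ) 1, (1 - t) * f w₀ + t * f z < f y₀ := by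
          intro t ht
          have hmem : (1 - t) • w₀ + t • z ∈ interior K :=
            hKconv.combo_interior_closure_mem_interior hw₀ (subset_closure hz)
              (by linarith [ht.2]) (le_of_lt ht.1) (by ring)
          have hlt := hfu1 _ hmem
          have : f ((1 - t) • w₀ + t • z) = (1 - t) * f w₀ + t * f z := by
            rw [map_add, map_smul, map_smul]; rfl
          rw [this] at hlt
          linarith
        have hcont : Continuous fun t : ℝ => (1 - t) * f w₀ + t * f z := by continuity
        have htend : Filter.Tendsto (fun t : ℝ => (1 - t) * f w₀ + t * f z)
            (nhdsWithin 1 (Set.Ioo 0 1)) (nhds (f z)) := by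
          have h1 := hcont.tendsto 1
          have h2 : (1 - (1:ℝ)) * f w₀ + 1 * f z = f z := by ring
          rw [h2] at h1
          exact h1.mono_left nhdsWithin_le_nhds
        have hnb : (nhdsWithin (1:ℝ) (Set.Ioo 0 1)).NeBot := by
          refine mem_closure_iff_nhdsWithin_neBot.1 ?_
          rw [closure_Ioo (by norm_num : (0:ℝ) ≠ 1)]
          exact ⟨by norm_num, le_refl 1⟩
        exact le_of_tendsto htend
          (Filter.eventually_of_mem self_mem_nhdsWithin (fun t ht => (hseg t ht).le))
  obtain ⟨f, hf0, hfle⟩ := hsep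
  set r : ℝ := f y₀ with hr
  -- representation of y₀ as a convex combination of the c b
  have himg : (Set.range c) = ↑(Finset.univ.image c) := by
    rw [Finset.coe_image, Finset.coe_univ, Set.image_univ]
  have hy₀K' : y₀ ∈ convexHull ℝ (↑(Finset.univ.image c) : Set (Fin n → ℝ)) := by
    rw [← himg]; exact hy₀K
  rw [Finset.convexHull_eq] at hy₀K'
  obtain ⟨w, hw0, hw1, hwc⟩ := hy₀K'
  have hwc' : ∑ z ∈ Finset.univ.image c, w z • z = y₀ := by
    rw [Finset.centerMass_eq_of_sum_1 _ id hw1] at hwc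
    simpa using hwc
  -- weights vanish off the face {f = r}
  have hface : ∀ z ∈ Finset.univ.image c, w z * (r - f z) = 0 := by
    have hsum0 : ∑ z ∈ Finset.univ.image c, w z * (r - f z) = 0 := by
      have h1 : ∑ z ∈ Finset.univ.image c, w z * f z = r := by
        have := congrArg f hwc'
        rw [map_sum] at this
        simp only [map_smul, smul_eq_mul] at this
        rw [this]
      have h2 : ∑ z ∈ Finset.univ.image c, w z * r = r := by
        rw [← Finset.sum_mul, hw1, one_mul]
      calc ∑ z ∈ Finset.univ.image c, w z * (r - f z)
          = ∑ z ∈ Finset.univ.image c, (w z * r - w z * f z) := by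
            refine Finset.sum_congr rfl fun z _ => by ring
        _ = 0 := by rw [Finset.sum_sub_distrib, h1, h2, sub_self]
    refine (Finset.sum_eq_zero_iff_of_nonneg fun z hz => ?_).1 hsum0
    have hzK : z ∈ K := by
      rw [hK, himg]; exact subset_convexHull _ _ hz
    exact mul_nonneg (hw0 z hz) (by linarith [hfle z hzK])
  set S : Finset (Fin n → ℝ) := (Finset.univ.image c).filter (fun z => f z = r) with hS
  have hwzero : ∀ z ∈ Finset.univ.image c, z ∉ S → w z = 0 := by
    intro z hz hzS
    have hne' : f z ≠ r := by
      intro h; exact hzS (Finset.mem_filter.2 ⟨hz, h⟩)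
    have := hface z hz
    rcases mul_eq_zero.1 this with h | h
    · exact h
    · exact absurd (by linarith [h] : f z = r) hne'
  have hsum1S : ∑ z ∈ S, w z = 1 := by
    rw [← hw1]
    refine Finset.sum_subset (Finset.filter_subset _ _) ?_
    intro z hz hzS; exact hwzero z hz hzS
  have hsumS : ∑ z ∈ S, w z • z = y₀ := by
    rw [← hwc']
    refine Finset.sum_subset (Finset.filter_subset _ _) ?_
    intro z hz hzS; rw [hwzero z hz hzS, zero_smul]
  have hySface : y₀ ∈ convexHull ℝ (↑S : Set (Fin n → ℝ)) := by
    rw [Finset.convexHull_eq]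
    exact ⟨w, fun z hz => hw0 z (Finset.filter_subset _ _ hz), hsum1S,
      by rw [Finset.centerMass_eq_of_sum_1 _ id hsum1S]; simpa using hsumS⟩
  -- Carathéodory inside the face
  rw [convexHull_eq_union] at hySface
  simp only [Set.mem_iUnion] at hySface
  obtain ⟨t, htS, hai, hyt⟩ := hySface
  have htne : t.Nonempty := by
    rcases Finset.eq_empty_or_nonempty t with h | h
    · rw [h] at hyt; simp at hyt
    · exact h
  -- cardinality bound : affinely independent subset of the hyperplane {f = r}
  have hcard : t.card ≤ n := by
    have hker : vectorSpan ℝ (Set.range ((↑) : t → (Fin n → ℝ))) ≤ LinearMap.ker f := by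
      rw [vectorSpan_def]
      rw [Submodule.span_le]
      rintro v ⟨z₁, hz₁, z₂, hz₂, rfl⟩
      have hz₁' : f z₁ = r := by
        obtain ⟨a, _, rfl⟩ := hz₁
        exact (Finset.mem_filter.1 (htS a.2)).2
      have hz₂' : f z₂ = r := by
        obtain ⟨a, _, rfl⟩ := hz₂
        exact (Finset.mem_filter.1 (htS a.2)).2
      simp only [SetLike.mem_coe, LinearMap.mem_ker, vsub_eq_sub, map_sub, hz₁', hz₂', sub_self]
    have hpos := htne.card_pos
    have hcardt : Fintype.card ↥t = (t.card - 1) + 1 := by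
      rw [Fintype.card_coe]
      omega
    have hrank := hai.finrank_vectorSpan hcardt
    have hker_lt : LinearMap.ker f ≠ ⊤ := by
      intro h; exact hf0 (LinearMap.ker_eq_top.1 h)
    have hker_rank : Module.finrank ℝ (LinearMap.ker f) < n := by
      have := Submodule.finrank_lt hker_lt
      rwa [Module.finrank_fin_fun] at this
    have hle2 : Module.finrank ℝ (vectorSpan ℝ (Set.range ((↑) : t → (Fin n → ℝ))))
        ≤ Module.finrank ℝ (LinearMap.ker f) := Submodule.finrank_mono hker
    rw [hrank] at hle2
    omega
  -- weights on t
  rw [Finset.convexHull_eq] at hyt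
  obtain ⟨v, hv0, hv1, hvc⟩ := hyt
  have hvc' : ∑ z ∈ t, v z • z = y₀ := by
    rw [Finset.centerMass_eq_of_sum_1 _ id hv1] at hvc
    simpa using hvc
  -- choose preimages under c
  set bz : (Fin n → ℝ) → β := fun z => Function.invFun c z with hbzdef
  have hbz : ∀ z ∈ t, c (bz z) = z := by
    intro z hz
    have hzS : z ∈ S := htS hz
    have hzim : z ∈ Finset.univ.image c := (Finset.mem_filter.1 hzS).1
    obtain ⟨b, _, rfl⟩ := Finset.mem_image.1 hzim
    exact Function.invFun_eq ⟨b, rfl⟩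
  set g : β → ℝ := fun b => ∑ z ∈ t.filter (fun z => bz z = b), v z with hgdef
  have hg0 : ∀ b, 0 ≤ g b := by
    intro b
    exact Finset.sum_nonneg fun z hz => hv0 z (Finset.mem_filter.1 hz).1
  have hg1 : ∑ b, g b = 1 := by
    rw [hgdef]
    rw [Finset.sum_fiberwise_of_maps_to (fun z _ => Finset.mem_univ (bz z)) v]
    exact hv1
  have hgsupp : ∀ b ∉ t.image bz, g b = 0 := by
    intro b hb
    refine Finset.sum_eq_zero fun z hz => ?_
    obtain ⟨hzt, hzb⟩ := Finset.mem_filter.1 hz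
    exact absurd (Finset.mem_image.2 ⟨z, hzt, hzb⟩) hb
  have hcombg : comb g = y₀ := by
    rw [hcombdef]
    calc ∑ b, g b • c b
        = ∑ b, ∑ z ∈ t.filter (fun z => bz z = b), v z • c b := by
          refine Finset.sum_congr rfl fun b _ => ?_
          rw [hgdef, Finset.sum_smul]
      _ = ∑ b, ∑ z ∈ t.filter (fun z => bz z = b), v z • z := by
          refine Finset.sum_congr rfl fun b _ => Finset.sum_congr rfl fun z hz => ?_
          obtain ⟨hzt, hzb⟩ := Finset.mem_filter.1 hz
          rw [← hzb, hbz z hzt]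
      _ = ∑ z ∈ t, v z • z :=
          Finset.sum_fiberwise_of_maps_to (fun z _ => Finset.mem_univ (bz z)) _
      _ = y₀ := hvc'
  refine ⟨g, ⟨hg0, hg1⟩, ⟨t.image bz, le_trans Finset.card_image_le hcard, hgsupp⟩,
    fun h hh => ?_⟩
  have h1 : (fun i => ∑ b, g b * c b i) = comb g := by
    funext i; rw [hcomb_apply]
  have h2 : (fun i => ∑ b, h b * c b i) = comb h := by
    funext i; rw [hcomb_apply]
  have hmin := hy₀min (hmemK h hh)
  rw [Set.mem_setOf_eq] at hmin
  calc Finset.univ.sup' ⟨⟨0, hn⟩, Finset.mem_univ _⟩ (fun i => ∑ b, g b * c b i)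
      = φ (comb g) := by rw [h1]
    _ = φ y₀ := by rw [hcombg]
    _ ≤ φ (comb h) := hmin
    _ = Finset.univ.sup' ⟨⟨0, hn⟩, Finset.mem_univ _⟩ (fun i => ∑ b, h b * c b i) := by
        rw [h2]

/-- Restricted small-support claim: once the strategies of all players but `k` are
fixed, the objective `x'_k ↦ max_i E[Ũ_i]` attains its minimum over the simplex at
a strategy whose support has at most `n` elements, where `Ũ_i(a) = E_x[U_i] − U_i(a)`. -/
theorem minmax_small_support {n : ℕ} (hn : 0 < n)
    {A : Fin n → Type*} [∀ i, Fintype (A i)]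
    (U : Fin n → (∀ i, A i) → ℝ) (x : ∀ i, A i → ℝ) (hx : isProfile x)
    (k : Fin n) (x' : ∀ j, A j → ℝ) (hx' : isProfile x') :
    ∃ g : A k → ℝ, isDist g ∧
      (∃ s : Finset (A k), s.card ≤ n ∧ ∀ a ∉ s, g a = 0) ∧
      ∀ h : A k → ℝ, isDist h →
        (Finset.univ.sup' ⟨⟨0, hn⟩, Finset.mem_univ _⟩
            (fun i => expU (fun a => expU (U i) x - U i a) (Function.update x' k g))) ≤
        (Finset.univ.sup' ⟨⟨0, hn⟩, Finset.mem_univ _⟩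
            (fun i => expU (fun a => expU (U i) x - U i a) (Function.update x' k h))) := by
  classical
  have hA : Nonempty (A k) := by
    by_contra hcon
    rw [not_nonempty_iff] at hcon
    have h1 := (hx' k).2
    rw [Finset.univ_eq_empty, Finset.sum_empty] at h1
    norm_num at h1
  set cvec : A k → Fin n → ℝ := fun b i =>
    ∑ a ∈ Finset.univ.filter (fun a : ∀ i, A i => a k = b),
      (expU (U i) x - U i a) * ∏ j ∈ Finset.univ.erase k, x' j (a j) with hcvec
  obtain ⟨g, hgd, hgs, hgmin⟩ := exists_min_small_support hn cvec
  refine ⟨g, hgd, hgs, fun h hh => ?_⟩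
  have key : ∀ (w : A k → ℝ),
      (fun i => expU (fun a => expU (U i) x - U i a) (Function.update x' k w))
        = (fun i => ∑ b, w b * cvec b i) := by
    intro w
    funext i
    rw [expU_update (fun a => expU (U i) x - U i a) x' k w, hcvec]
  rw [key g, key h]
  exact hgmin h hh
end
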